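/- The quadratic loss L(Θ) = ‖Y − X⊙Θ‖_F² is universally majorized by p(Θ, Θ_k, τ) = τ⁻¹‖Θ_k − τA_k − Θ‖_F² + L(Θ_k) − τ‖A_k‖_F², where A_k = X⊙(X⊙Θ_k − Y): for all Θ, L(Θ) ≤ p(Θ, Θ_k, τ), with equality L(Θ_k) = p(Θ_k, Θ_k, τ), provided 0 < τ < 1/max_{i,t} x_{it}². -/

import Mathlib

open Matrix BigOperators

/-- Squared Frobenius norm of a real matrix. -/
noncomputable def frobSq {m n : ℕ} (A : Matrix (Fin m) (Fin n) ℝ) : ℝ :=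
  ∑ i, ∑ j, A i j ^ 2

/-- Singular values of a real matrix: square roots of the eigenvalues of `Aᴴ * A`. -/
noncomputable def singVals {m n : ℕ} (A : Matrix (Fin m) (Fin n) ℝ) : Fin n → ℝ :=
  fun j => Real.sqrt ((show (Aᵀ * A).IsHermitian by
    simpa [Matrix.conjTranspose_eq_transpose_of_trivial] using
      Matrix.isHermitian_conjTranspose_mul_self A).eigenvalues j)

/-- Nuclear norm: sum of the singular values. -/
noncomputable def nuclearNorm {m n : ℕ} (A : Matrix (Fin m) (Fin n) ℝ) : ℝ :=
  ∑ j, singVals A j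

/-- Operator (spectral) norm: largest singular value. -/
noncomputable def opNorm {m n : ℕ} (A : Matrix (Fin m) (Fin n) ℝ) : ℝ :=
  ⨆ j, singVals A j

/-- majorization. With `L(Θ) = ‖Y − X⊙Θ‖_F²` and
`A_k = X ⊙ (X ⊙ Θ_k − Y)`, for any step size `0 < τ < 1 / max_{it} x_{it}²` the loss `L` is
universally majorized by `p(Θ, Θ_k, τ) = τ⁻¹‖Θ_k − τ A_k − Θ‖_F² + L(Θ_k) − τ‖A_k‖_F²`,
with equality at `Θ = Θ_k`. -/
theorem stmt5 {N T : ℕ} (Y X Θk : Matrix (Fin N) (Fin T) ℝ) (τ : ℝ)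
    (hτ : 0 < τ) (hτX : ∀ i t, τ * X i t ^ 2 < 1) :
    (∀ Θ : Matrix (Fin N) (Fin T) ℝ,
      frobSq (Y - X ⊙ Θ) ≤
        τ⁻¹ * frobSq (Θk - τ • (X ⊙ (X ⊙ Θk - Y)) - Θ)
          + frobSq (Y - X ⊙ Θk) - τ * frobSq (X ⊙ (X ⊙ Θk - Y))) ∧
    frobSq (Y - X ⊙ Θk) =
      τ⁻¹ * frobSq (Θk - τ • (X ⊙ (X ⊙ Θk - Y)) - Θk)
        + frobSq (Y - X ⊙ Θk) - τ * frobSq (X ⊙ (X ⊙ Θk - Y)) := by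
  constructor
  · intro Θ
    have key : ∀ i t, (Y - X ⊙ Θ) i t ^ 2 ≤
        τ⁻¹ * ((Θk - τ • (X ⊙ (X ⊙ Θk - Y)) - Θ) i t) ^ 2
          + (Y - X ⊙ Θk) i t ^ 2 - τ * ((X ⊙ (X ⊙ Θk - Y)) i t) ^ 2 := by
      intro i t
      simp only [Matrix.sub_apply, Matrix.smul_apply, Matrix.hadamard_apply, smul_eq_mul]
      have h1 : τ * τ⁻¹ = 1 := mul_inv_cancel₀ hτ.ne'
      have h2 : 0 < τ⁻¹ := inv_pos.2 hτ
      have h3 : (0:ℝ) < 1 - τ * X i t ^ 2 := by linarith [hτX i t]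
      nlinarith [mul_nonneg (mul_nonneg h2.le h3.le) (sq_nonneg (Θk i t - Θ i t)),
        sq_nonneg (Θk i t - Θ i t)]
    simp only [frobSq, Finset.mul_sum, ← Finset.sum_sub_distrib, ← Finset.sum_add_distrib]
    exact Finset.sum_le_sum fun i _ => Finset.sum_le_sum fun t _ => key i t
  · have h : Θk - τ • (X ⊙ (X ⊙ Θk - Y)) - Θk = -(τ • (X ⊙ (X ⊙ Θk - Y))) := by
      abel
    rw [h]
    have h2 : frobSq (-(τ • (X ⊙ (X ⊙ Θk - Y)))) = τ ^ 2 * frobSq (X ⊙ (X ⊙ Θk - Y)) := by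
      simp [frobSq, mul_pow, Finset.mul_sum, mul_comm]
    rw [h2]
    field_simp
    ring
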